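/- Consider signed distributions μ : ({−1,1})⁴ → ℝ on outcomes (a, b, a′, b′) with Σ μ = 1 whose four pairwise marginals onto the contexts (a,a′), (a,b′), (b,a′), (b,b′) equal the Bell-model tables: for (a,a′): equal outcomes have probability 1/2 each and unequal outcomes probability 0; for (a,b′) and for (b,a′): equal outcomes have probability 3/8 each and unequal outcomes 1/8 each; for (b,b′): equal outcomes have probability 1/8 each and unequal outcomes 3/8 each. Then the minimum of Σ_{ω ∈ ({−1,1})⁴} |μ(ω)| over all such μ equals 5/4 (equivalently, the contextuality of this empirical model equals 1/4). -/
import Mathlib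

/-- The two-point outcome set `{-1, 1}`. -/
abbrev PM : Type := ({-1, 1} : Finset ℤ)

def pmN : PM := ⟨-1, by decide⟩
def pmP : PM := ⟨1, by decide⟩

lemma sum_PM (f : PM → ℝ) : ∑ x : PM, f x = f pmN + f pmP := by
  rw [show (Finset.univ : Finset PM) = {pmN, pmP} by decide]
  rw [Finset.sum_insert (by decide), Finset.sum_singleton]

lemma PM_cases (x : PM) : x = pmN ∨ x = pmP := by
  rcases x with ⟨v, hv⟩
  fin_cases hv
  · exact Or.inl rfl
  · exact Or.inr rfl

noncomputable def ν (a b a' b' : ℤ) : ℝ :=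
  if a = -1 ∧ b = -1 ∧ a' = -1 ∧ b' = -1 then 1/4 else
  if a = -1 ∧ b = -1 ∧ a' = -1 ∧ b' = 1 then 1/8 else
  if a = -1 ∧ b = -1 ∧ a' = 1 ∧ b' = -1 then -(1/8) else
  if a = -1 ∧ b = 1 ∧ a' = -1 ∧ b' = -1 then 1/8 else
  if a = -1 ∧ b = 1 ∧ a' = 1 ∧ b' = -1 then 1/8 else
  if a = 1 ∧ b = -1 ∧ a' = 1 ∧ b' = 1 then 1/4 else
  if a = 1 ∧ b = 1 ∧ a' = 1 ∧ b' = -1 then 1/8 else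
  if a = 1 ∧ b = 1 ∧ a' = 1 ∧ b' = 1 then 1/8 else
  0

/-- For the Bell empirical model (contexts `(a,a')`, `(a,b')`, `(b,a')`, `(b,b')` with the
tables: `(a,a')`: equal outcomes `1/2`, unequal `0`; `(a,b')`, `(b,a')`: equal `3/8`,
unequal `1/8`; `(b,b')`: equal `1/8`, unequal `3/8`), the minimum of `∑ |μ(ω)|` over all
signed distributions `μ` on `({-1,1})⁴` with `∑ μ = 1` reproducing these pairwise
marginals equals `5/4`, i.e. the contextuality of the model is `1/4`. -/
theorem stmt_9 :
    IsLeast {s : ℝ | ∃ μ : PM → PM → PM → PM → ℝ,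
        (∑ a : PM, ∑ b : PM, ∑ a' : PM, ∑ b' : PM, μ a b a' b' = 1) ∧
        (∀ a a' : PM, ∑ b : PM, ∑ b' : PM, μ a b a' b'
            = if a = a' then 1/2 else 0) ∧
        (∀ a b' : PM, ∑ b : PM, ∑ a' : PM, μ a b a' b'
            = if a = b' then 3/8 else 1/8) ∧
        (∀ b a' : PM, ∑ a : PM, ∑ b' : PM, μ a b a' b'
            = if b = a' then 3/8 else 1/8) ∧
        (∀ b b' : PM, ∑ a : PM, ∑ a' : PM, μ a b a' b'
            = if b = b' then 1/8 else 3/8) ∧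
        s = ∑ a : PM, ∑ b : PM, ∑ a' : PM, ∑ b' : PM, |μ a b a' b'|}
      (5/4) := by
  constructor
  · refine ⟨fun a b a' b' => ν a.1 b.1 a'.1 b'.1, ?_, ?_, ?_, ?_, ?_, ?_⟩
    · simp only [sum_PM]; norm_num [ν, pmN, pmP]
    · intro a a'
      rcases PM_cases a with rfl | rfl <;> rcases PM_cases a' with rfl | rfl <;>
        simp only [sum_PM] <;> norm_num [ν, pmN, pmP]
    · intro a b'
      rcases PM_cases a with rfl | rfl <;> rcases PM_cases b' with rfl | rfl <;>
        simp only [sum_PM] <;> norm_num [ν, pmN, pmP]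
    · intro b a'
      rcases PM_cases b with rfl | rfl <;> rcases PM_cases a' with rfl | rfl <;>
        simp only [sum_PM] <;> norm_num [ν, pmN, pmP]
    · intro b b'
      rcases PM_cases b with rfl | rfl <;> rcases PM_cases b' with rfl | rfl <;>
        simp only [sum_PM] <;> norm_num [ν, pmN, pmP]
    · simp only [sum_PM]
      norm_num [ν, pmN, pmP, abs_of_nonneg, abs_of_nonpos,
        abs_of_nonneg (show (0:ℝ) ≤ 1/4 by norm_num),
        abs_of_nonneg (show (0:ℝ) ≤ 1/8 by norm_num)]
  · rintro s ⟨μ, h0, h1, h2, h3, h4, hs⟩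
    simp only [sum_PM] at h0 hs
    have e1 := h1 pmN pmN
    have e2 := h1 pmN pmP
    have e3 := h1 pmP pmN
    have e4 := h1 pmP pmP
    have e5 := h2 pmN pmN
    have e6 := h2 pmN pmP
    have e7 := h2 pmP pmN
    have e8 := h2 pmP pmP
    have e9 := h3 pmN pmN
    have e10 := h3 pmN pmP
    have e11 := h3 pmP pmN
    have e12 := h3 pmP pmP
    have e13 := h4 pmN pmN
    have e14 := h4 pmN pmP
    have e15 := h4 pmP pmN
    have e16 := h4 pmP pmP
    simp only [sum_PM] at e1 e2 e3 e4 e5 e6 e7 e8 e9 e10 e11 e12 e13 e14 e15 e16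
    simp only [show (pmN = pmP) ↔ False from by simp [pmN, pmP],
      show (pmP = pmN) ↔ False from by simp [pmN, pmP],
      eq_self_iff_true, if_true, if_false] at e1 e2 e3 e4 e5 e6 e7 e8 e9 e10 e11 e12 e13 e14 e15 e16
    have := le_abs_self (μ pmN pmN pmN pmN); have := neg_abs_le (μ pmN pmN pmN pmN)
    have := le_abs_self (μ pmN pmN pmN pmP); have := neg_abs_le (μ pmN pmN pmN pmP)
    have := le_abs_self (μ pmN pmN pmP pmN); have := neg_abs_le (μ pmN pmN pmP pmN)
    have := le_abs_self (μ pmN pmN pmP pmP); have := neg_abs_le (μ pmN pmN pmP pmP)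
    have := le_abs_self (μ pmN pmP pmN pmN); have := neg_abs_le (μ pmN pmP pmN pmN)
    have := le_abs_self (μ pmN pmP pmN pmP); have := neg_abs_le (μ pmN pmP pmN pmP)
    have := le_abs_self (μ pmN pmP pmP pmN); have := neg_abs_le (μ pmN pmP pmP pmN)
    have := le_abs_self (μ pmN pmP pmP pmP); have := neg_abs_le (μ pmN pmP pmP pmP)
    have := le_abs_self (μ pmP pmN pmN pmN); have := neg_abs_le (μ pmP pmN pmN pmN)
    have := le_abs_self (μ pmP pmN pmN pmP); have := neg_abs_le (μ pmP pmN pmN pmP)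
    have := le_abs_self (μ pmP pmN pmP pmN); have := neg_abs_le (μ pmP pmN pmP pmN)
    have := le_abs_self (μ pmP pmN pmP pmP); have := neg_abs_le (μ pmP pmN pmP pmP)
    have := le_abs_self (μ pmP pmP pmN pmN); have := neg_abs_le (μ pmP pmP pmN pmN)
    have := le_abs_self (μ pmP pmP pmN pmP); have := neg_abs_le (μ pmP pmP pmN pmP)
    have := le_abs_self (μ pmP pmP pmP pmN); have := neg_abs_le (μ pmP pmP pmP pmN)
    have := le_abs_self (μ pmP pmP pmP pmP); have := neg_abs_le (μ pmP pmP pmP pmP)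
    linarith
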